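/- arXiv:1505.05460 — 6 statements merged into one kernel-verified Lean document; each statement's English description precedes it below -/
import Mathlib

section
/- With g = (r+1)·s and d = g + r − s, the set A has exactly 2d − g + 1 elements. -/
open Finset

private def loA (R S E t : ℤ) : ℤ :=
  if t < R - 2*S + E ∨ R + 2*S < t then t/2
  else if R - S + E ≤ t ∧ t ≤ R + S then max ((R-2*S+E)/2) (t - (R+2*S+E)/2)
  else max 0 (t - R)

private def LL (n : ℕ) : ℤ := ∑ k ∈ Finset.range n, ((k:ℤ)/2)

private lemma LL_succ (n : ℕ) : LL (n+1) = LL n + (n:ℤ)/2 := by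
  simp [LL, Finset.sum_range_succ]

private lemma MM (n : ℕ) : ∑ k ∈ Finset.range n, ((k:ℤ)%2) = (n:ℤ)/2 := by
  induction n with
  | zero => simp
  | succ n ih => rw [Finset.sum_range_succ, ih]; push_cast; omega

private lemma LL_shift (c : ℕ) : ∀ n : ℕ, ∑ k ∈ Finset.range n, (((c:ℤ) + (k:ℤ))/2) = LL (c+n) - LL c := by
  intro n
  induction n with
  | zero => simp
  | succ n ih =>
    rw [Finset.sum_range_succ, ih, show c + (n+1) = (c+n)+1 from rfl, LL_succ]
    push_cast
    ring_nf

private lemma LL_even (n : ℕ) : LL (2*n) = (n:ℤ)*((n:ℤ)-1) := by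
  induction n with
  | zero => simp [LL]
  | succ n ih =>
    have h1 : 2*(n+1) = (2*n) + 1 + 1 := by ring
    rw [h1, LL_succ, LL_succ, ih]
    have h2 : ((2*n:ℕ):ℤ)/2 = n := by push_cast; omega
    have h3 : (((2*n)+1:ℕ):ℤ)/2 = n := by push_cast; omega
    rw [h2, h3]
    push_cast; ring

private lemma LL_odd (n : ℕ) : LL (2*n+1) = (n:ℤ)*n := by
  rw [LL_succ, LL_even]
  have h2 : ((2*n:ℕ):ℤ)/2 = n := by push_cast; omega
  rw [h2]; ring

private lemma sum_neg_half (n : ℕ) : ∑ k ∈ Finset.range n, ((-(k:ℤ))/2) = -(LL n + (n:ℤ)/2) := by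
  have h : ∀ k ∈ Finset.range n, (-(k:ℤ))/2 = -((k:ℤ)/2) - (k:ℤ)%2 := by
    intro k _; omega
  rw [Finset.sum_congr rfl h, Finset.sum_sub_distrib, MM, Finset.sum_neg_distrib]
  simp only [LL]
  ring

private lemma sum_Ico_split (f : ℤ → ℤ) {a b c : ℤ} (hab : a ≤ b) (hbc : b ≤ c) :
    ∑ t ∈ Finset.Ico a c, f t = ∑ t ∈ Finset.Ico a b, f t + ∑ t ∈ Finset.Ico b c, f t := by
  rw [← Finset.Ico_union_Ico_eq_Ico hab hbc,
    Finset.sum_union (Finset.Ico_disjoint_Ico_consecutive a b c)]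

private lemma Ico_singleton (b : ℤ) : Finset.Ico b (b+1) = {b} := by
  ext x; simp only [Finset.mem_Ico, Finset.mem_singleton]; omega

private lemma sum_Ico_int (a : ℤ) (n : ℕ) (f : ℤ → ℤ) :
    ∑ t ∈ Finset.Ico a (a + (n:ℤ)), f t = ∑ k ∈ Finset.range n, f (a + (k:ℤ)) := by
  induction n with
  | zero => simp
  | succ n ih =>
    push_cast
    rw [show a + ((n:ℤ)+1) = (a + (n:ℤ)) + 1 by ring,
      sum_Ico_split f (by omega : a ≤ a + (n:ℤ)) (by omega), Ico_singleton,
      Finset.sum_singleton, Finset.sum_range_succ, ih]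

private lemma LL_plus2 (n : ℕ) : LL (n+2) = LL n + (n:ℤ) := by
  rw [show n+2 = (n+1)+1 from rfl, LL_succ, LL_succ]
  push_cast
  omega

private lemma sum_shift_neg (s : ℕ) :
    ∑ k ∈ Finset.range (s+1), (((k:ℤ) - (s:ℤ))/2) = -(LL (s+1) + (((s:ℤ)+1))/2) := by
  rw [← Finset.sum_range_reflect]
  have h : ∀ j ∈ Finset.range (s+1), ((↑(s+1-1-j) : ℤ) - (s:ℤ))/2 = (-(j:ℤ))/2 := by
    intro j hj
    simp only [Finset.mem_range] at hj
    omega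
  rw [Finset.sum_congr rfl h, sum_neg_half]
  push_cast
  ring

/-- Fix natural numbers `r`, `s` with `1 ≤ s` and `2s ≤ r`, and let `ε = 1` if `r` is odd,
`ε = 0` if `r` is even.  Let `A` be the set of integer pairs `(i,j)` with `0 ≤ i ≤ j ≤ r`
not lying in any of the three excluded regions (two half-open triangles and the closed
chevron).  Then, with `g = (r+1)s` and `d = g + r − s`, the set `A` has exactly
`2d − g + 1` elements. -/
theorem stmt4 (r s : ℕ) (hs : 1 ≤ s) (hrs : 2 * s ≤ r)
    (ε : ℤ) (hε : ε = if Odd r then 1 else 0)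
    (A : Set (ℤ × ℤ))
    (hA : A = {p : ℤ × ℤ | 0 ≤ p.1 ∧ p.1 ≤ p.2 ∧ p.2 ≤ (r : ℤ) ∧
        ¬(p.1 + 2 ≤ p.2 ∧ p.1 + p.2 < (r : ℤ) - 2 * s + ε) ∧
        ¬(p.1 + 2 ≤ p.2 ∧ (r : ℤ) + 2 * s < p.1 + p.2) ∧
        ¬(((r : ℤ) - s + ε ≤ p.1 + p.2 ∧ p.1 + p.2 ≤ (r : ℤ) + s) ∧
            (2 * p.1 ≤ (r : ℤ) - 2 * s - 2 + ε ∨ (r : ℤ) + 2 * s + 2 ≤ 2 * p.2))})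
    (g d : ℤ) (hg : g = ((r : ℤ) + 1) * s) (hd : d = g + r - s) :
    (A.ncard : ℤ) = 2 * d - g + 1 := by
  have hε01 : ε = 0 ∨ ε = 1 := by rw [hε]; split <;> simp
  have hpar : (2:ℤ) ∣ ((r:ℤ) + ε) := by
    rw [hε]
    rcases Nat.even_or_odd r with h | h
    · rw [if_neg (Nat.not_odd_iff_even.mpr h)]
      obtain ⟨m, hm⟩ := h
      exact ⟨m, by push_cast [hm]; ring⟩
    · rw [if_pos h]
      obtain ⟨m, hm⟩ := h
      exact ⟨m+1, by push_cast [hm]; ring⟩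
  have hs1 : (1:ℤ) ≤ (s:ℤ) := by exact_mod_cast hs
  have hrs1 : 2*(s:ℤ) ≤ (r:ℤ) := by exact_mod_cast hrs
  set R := (r:ℤ) with hR
  have hAF : A = ↑((Finset.Icc 0 (2*R)).biUnion
      (fun t => (Finset.Icc (loA R s ε t) (t/2)).image (fun i => (i, t - i)))) := by
    rw [hA]
    ext ⟨i, j⟩
    simp only [Set.mem_setOf_eq, Finset.mem_coe, Finset.mem_biUnion,
      Finset.mem_Icc, Finset.mem_image, Prod.mk.injEq, exists_prop]
    constructor
    · rintro ⟨h1, h2, h3, h4, h5, h6⟩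
      refine ⟨i + j, ⟨by omega, by omega⟩, i, ⟨?_, by omega⟩, rfl, by ring⟩
      unfold loA
      split_ifs <;> omega
    · rintro ⟨t, ⟨ht0, ht1⟩, x, ⟨hx0, hx1⟩, rfl, rfl⟩
      unfold loA at hx0
      split_ifs at hx0 <;> omega
  rw [hd, hg, hAF, Set.ncard_coe_finset]
  have hdisj : ∀ t1 ∈ Finset.Icc (0:ℤ) (2*R), ∀ t2 ∈ Finset.Icc (0:ℤ) (2*R), t1 ≠ t2 →
      Disjoint ((Finset.Icc (loA R s ε t1) (t1/2)).image (fun i => (i, t1 - i)))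
               ((Finset.Icc (loA R s ε t2) (t2/2)).image (fun i => (i, t2 - i))) := by
    intro t1 _ t2 _ hne
    simp only [Finset.disjoint_left, Finset.mem_image, Finset.mem_Icc]
    rintro p ⟨x, hx, rfl⟩ ⟨y, hy, hye⟩
    simp only [Prod.mk.injEq] at hye
    omega
  rw [Finset.card_biUnion hdisj]
  have hcard : ∀ t, ((Finset.Icc (loA R s ε t) (t/2)).image (fun i => (i, t - i))).card
      = (t/2 + 1 - loA R s ε t).toNat := by
    intro t
    rw [Finset.card_image_of_injective _ (fun a b h => congrArg Prod.fst h), Int.card_Icc]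
  rw [Finset.sum_congr rfl (fun t _ => hcard t), Nat.cast_sum]
  have hlo : ∀ t ∈ Finset.Icc (0:ℤ) (2*R), (((t/2 + 1 - loA R s ε t).toNat : ℤ)) = t/2 + 1 - loA R s ε t := by
    intro t ht
    simp only [Finset.mem_Icc] at ht
    rw [Int.toNat_of_nonneg]
    unfold loA
    split_ifs <;> omega
  rw [Finset.sum_congr rfl hlo]
  obtain ⟨e, he, he1⟩ : ∃ e : ℕ, (e:ℤ) = ε ∧ e ≤ 1 := by
    rcases hε01 with h | h
    · exact ⟨0, by simp [h], by omega⟩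
    · exact ⟨1, by simp [h], by omega⟩
  have hH : 2*((R + ε)/2) = R + ε := by omega
  set H := (R + ε)/2 with hHdef
  rw [show Finset.Icc (0:ℤ) (2*R) = Finset.Ico (0:ℤ) (2*R+1) by
    ext x; simp only [Finset.mem_Icc, Finset.mem_Ico]; omega]
  rw [sum_Ico_split _ (show (0:ℤ) ≤ R - 2*s + ε by omega) (show R - 2*s + ε ≤ 2*R+1 by omega)]
  rw [sum_Ico_split _ (show R - 2*s + ε ≤ R - s + ε by omega) (show R - s + ε ≤ 2*R+1 by omega)]
  rw [sum_Ico_split _ (show R - s + ε ≤ R + ε + 1 by omega) (show R + ε + 1 ≤ 2*R+1 by omega)]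
  rw [sum_Ico_split _ (show R + ε + 1 ≤ R + s + 1 by omega) (show R + s + 1 ≤ 2*R+1 by omega)]
  rw [sum_Ico_split _ (show R + s + 1 ≤ R + 2*s + 1 by omega) (show R + 2*s + 1 ≤ 2*R+1 by omega)]
  have hS1 : ∑ t ∈ Finset.Ico (0:ℤ) (R - 2*s + ε), (t/2 + 1 - loA R s ε t)
      = ((r - 2*s + e : ℕ) : ℤ) := by
    rw [show R - 2*s + ε = 0 + ((r - 2*s + e : ℕ) : ℤ) by push_cast; omega, sum_Ico_int]
    have hpt : ∀ k ∈ Finset.range (r - 2*s + e),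
        ((0 + (k:ℤ))/2 + 1 - loA R s ε (0 + (k:ℤ))) = 1 := by
      intro k hk
      simp only [Finset.mem_range] at hk
      unfold loA
      split_ifs <;> omega
    rw [Finset.sum_congr rfl hpt, Finset.sum_const, Finset.card_range, nsmul_eq_mul, mul_one]
  have hS2 : ∑ t ∈ Finset.Ico (R - 2*s + ε) (R - s + ε), (t/2 + 1 - loA R s ε t)
      = (s:ℤ) * (H - s + 1) + LL s := by
    rw [show R - s + ε = (R - 2*s + ε) + ((s:ℕ):ℤ) by push_cast; omega, sum_Ico_int]
    have hpt : ∀ k ∈ Finset.range s,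
        (((R - 2*s + ε) + (k:ℤ))/2 + 1 - loA R s ε ((R - 2*s + ε) + (k:ℤ)))
          = (H - s + 1) + (k:ℤ)/2 := by
      intro k hk
      simp only [Finset.mem_range] at hk
      unfold loA
      split_ifs <;> omega
    rw [Finset.sum_congr rfl hpt, Finset.sum_add_distrib, Finset.sum_const, Finset.card_range,
      nsmul_eq_mul]
    rfl
  have hS3 : ∑ t ∈ Finset.Ico (R - s + ε) (R + ε + 1), (t/2 + 1 - loA R s ε t)
      = ((s:ℤ)+1) * ((s:ℤ)+1) + (-(LL (s+1) + (((s:ℤ)+1))/2)) := by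
    rw [show R + ε + 1 = (R - s + ε) + ((s+1:ℕ):ℤ) by push_cast; omega, sum_Ico_int]
    have hpt : ∀ k ∈ Finset.range (s+1),
        (((R - s + ε) + (k:ℤ))/2 + 1 - loA R s ε ((R - s + ε) + (k:ℤ)))
          = ((s:ℤ)+1) + ((k:ℤ) - (s:ℤ))/2 := by
      intro k hk
      simp only [Finset.mem_range] at hk
      unfold loA
      split_ifs <;> omega
    rw [Finset.sum_congr rfl hpt, Finset.sum_add_distrib, Finset.sum_const, Finset.card_range,
      nsmul_eq_mul, sum_shift_neg]
    push_cast
    ring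
  have hS4 : ∑ t ∈ Finset.Ico (R + ε + 1) (R + s + 1), (t/2 + 1 - loA R s ε t)
      = ((s - e:ℕ):ℤ) * (s:ℤ) - LL (s - e) := by
    rw [show R + s + 1 = (R + ε + 1) + ((s - e:ℕ):ℤ) by push_cast [Nat.cast_sub (le_trans he1 hs)]; omega,
      sum_Ico_int]
    have hpt : ∀ k ∈ Finset.range (s - e),
        (((R + ε + 1) + (k:ℤ))/2 + 1 - loA R s ε ((R + ε + 1) + (k:ℤ)))
          = (s:ℤ) - (k:ℤ)/2 := by
      intro k hk
      simp only [Finset.mem_range] at hk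
      unfold loA
      split_ifs <;> omega
    rw [Finset.sum_congr rfl hpt, Finset.sum_sub_distrib, Finset.sum_const, Finset.card_range,
      nsmul_eq_mul]
    rfl
  have hS5 : ∑ t ∈ Finset.Ico (R + s + 1) (R + 2*s + 1), (t/2 + 1 - loA R s ε t)
      = (s:ℤ) * (H + 1 - ε) - (LL ((s - e + 2) + s) - LL (s - e + 2)) := by
    rw [show R + 2*s + 1 = (R + s + 1) + ((s:ℕ):ℤ) by push_cast; omega, sum_Ico_int]
    have hpt : ∀ k ∈ Finset.range s,
        (((R + s + 1) + (k:ℤ))/2 + 1 - loA R s ε ((R + s + 1) + (k:ℤ)))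
          = (H + 1 - ε) - (((s - e + 2:ℕ):ℤ) + (k:ℤ))/2 := by
      intro k hk
      simp only [Finset.mem_range] at hk
      unfold loA
      split_ifs <;> omega
    rw [Finset.sum_congr rfl hpt, Finset.sum_sub_distrib, Finset.sum_const, Finset.card_range,
      nsmul_eq_mul, LL_shift]
  have hS6 : ∑ t ∈ Finset.Ico (R + 2*s + 1) (2*R + 1), (t/2 + 1 - loA R s ε t)
      = ((r - 2*s:ℕ):ℤ) := by
    rw [show 2*R + 1 = (R + 2*s + 1) + ((r - 2*s:ℕ):ℤ) by push_cast [Nat.cast_sub hrs]; omega,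
      sum_Ico_int]
    have hpt : ∀ k ∈ Finset.range (r - 2*s),
        (((R + 2*s + 1) + (k:ℤ))/2 + 1 - loA R s ε ((R + 2*s + 1) + (k:ℤ))) = 1 := by
      intro k hk
      simp only [Finset.mem_range] at hk
      unfold loA
      split_ifs <;> omega
    rw [Finset.sum_congr rfl hpt, Finset.sum_const, Finset.card_range, nsmul_eq_mul, mul_one]
  rw [hS1, hS2, hS3, hS4, hS5, hS6]
  have e1 : LL (s+1) = LL s + (s:ℤ)/2 := LL_succ s
  have e2 : LL (s - e + 2) = LL (s - e) + ((s - e:ℕ):ℤ) := LL_plus2 _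
  have e3 : LL ((s - e + 2) + s) = LL (2*s - e) + ((2*s - e:ℕ):ℤ) := by
    rw [show (s - e + 2) + s = (2*s - e) + 2 by omega, LL_plus2]
  have e4 : LL (2*s - e) = (s:ℤ)*((s:ℤ)-1) - ε*((s:ℤ)-1) := by
    rcases Nat.le_one_iff_eq_zero_or_eq_one.mp he1 with h | h
    · subst h
      have hε0 : ε = 0 := by omega
      rw [show 2*s - 0 = 2*s from rfl, LL_even, hε0]
      ring
    · subst h
      have hε1 : ε = 1 := by omega
      rw [show 2*s - 1 = 2*(s-1)+1 by omega, LL_odd, hε1, Nat.cast_sub hs]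
      push_cast
      ring
  rw [e1, e2, e3, e4]
  have c1 : ((r - 2*s + e : ℕ) : ℤ) = R - 2*s + ε := by push_cast; omega
  have c2 : ((s - e : ℕ) : ℤ) = (s:ℤ) - ε := by omega
  have c3 : ((2*s - e : ℕ) : ℤ) = 2*(s:ℤ) - ε := by omega
  have c4 : ((r - 2*s : ℕ) : ℤ) = R - 2*s := by push_cast; omega
  rw [c1, c2, c3, c4]
  have hdiv : (s:ℤ)/2 + ((s:ℤ)+1)/2 = (s:ℤ) := by omega
  rcases hε01 with h | h <;> subst h <;> linear_combination (s:ℤ) * hH - hdiv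
end

section
/- Assume e(ℓs) = e((ℓ+1)s) = ℓ + c − s, as an equality of integers. Then for all integers i, j, k with 0 ≤ i ≤ j ≤ r and a(ℓ) ≤ k ≤ b(ℓ): if deg(i,k−1) + deg(j,k−1) ≥ S(k−1) and deg(i,k) + deg(j,k) ≤ S(k), then either i = j = ℓ, or i < ℓ < j and i + j = ℓ + c. -/
/-- The arithmetic content of Lemma 7.1: with `c = ⌈r/2⌉`, `c − s ≤ ℓ < min(r, c+s)`,
`a(ℓ)`, `b(ℓ)` as in the paper, `deg i k` the degree of `D_i` on `Γ_[0,k]`, `δ(t) ≥ 2`,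
`S(k) = δ(0) + ⋯ + δ(k)` and `e(k) = S(k) − 2k`, if `e(ℓs) = e((ℓ+1)s) = ℓ + c − s`, then
any pair `(i,j)` with `0 ≤ i ≤ j ≤ r` that is δ-permissible on some loop `γ_k` with
`a(ℓ) ≤ k ≤ b(ℓ)` satisfies either `i = j = ℓ`, or `i < ℓ < j` and `i + j = ℓ + c`. -/
theorem stmt7 (r s : ℕ) (hs : 1 ≤ s)
    (c : ℕ) (hc : c = (r + 1) / 2)
    (ℓ : ℕ) (hℓ1 : (c : ℤ) - s ≤ (ℓ : ℤ)) (hℓ2 : ℓ < min r (c + s))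
    (a b : ℕ)
    (ha : a = if ℓ ≤ c then ℓ * s + 1 else ℓ * (s + 1) - c + 1)
    (hb : b = if ℓ ≤ c then ℓ * (s + 1) + s - c else (ℓ + 1) * s)
    (δ : ℕ → ℕ) (hδ : ∀ t, 2 ≤ δ t)
    (S : ℕ → ℕ) (hS : ∀ k, S k = ∑ t ∈ Finset.range (k + 1), δ t)
    (e : ℕ → ℤ) (he : ∀ k, e k = (S k : ℤ) - 2 * k)
    (deg : ℕ → ℕ → ℤ)
    (hdeg : ∀ i k, deg i k =
      if ℓ < i then (i : ℤ) + k
      else if i = ℓ then (ℓ : ℤ) * (s + 1)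
      else (i : ℤ) + k - s)
    (hyp1 : e (ℓ * s) = (ℓ : ℤ) + c - s)
    (hyp2 : e ((ℓ + 1) * s) = (ℓ : ℤ) + c - s) :
    ∀ i j k : ℕ, i ≤ j → j ≤ r → a ≤ k → k ≤ b →
      (S (k - 1) : ℤ) ≤ deg i (k - 1) + deg j (k - 1) →
      deg i k + deg j k ≤ (S k : ℤ) →
      (i = ℓ ∧ j = ℓ) ∨ (i < ℓ ∧ ℓ < j ∧ i + j = ℓ + c) := by
  intro i j k hij hjr hak hkb hy1 hy2
  have hlcs : ℓ < c + s := lt_of_lt_of_le hℓ2 (min_le_right _ _)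
  have e1 : ℓ * (s + 1) = ℓ * s + ℓ := by ring
  have e2 : (ℓ + 1) * s = ℓ * s + s := by ring
  rw [e1] at ha
  rw [e1, e2] at hb
  rw [e2] at hyp2
  obtain ⟨m, hm⟩ : ∃ m, m = ℓ * s := ⟨_, rfl⟩
  rw [← hm] at ha hb hyp1 hyp2
  have hmono : Monotone e := monotone_nat_of_le_succ fun n => by
    have h2 := hδ (n + 1)
    have h1 : S (n + 1) = S n + δ (n + 1) := by rw [hS, hS, Finset.sum_range_succ]
    rw [he n, he (n + 1), h1]
    push_cast
    linarith
  have hA : (ℓ ≤ c ∧ a = m + 1 ∧ b = m + ℓ + s - c) ∨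
      (c < ℓ ∧ a = m + ℓ - c + 1 ∧ b = m + s) := by
    rcases le_or_gt ℓ c with h | h
    · rw [if_pos h] at ha hb; exact Or.inl ⟨h, ha, hb⟩
    · rw [if_neg (not_le.mpr h)] at ha hb; exact Or.inr ⟨h, ha, hb⟩
  have hka : m + 1 ≤ k := by omega
  have hkb2 : k ≤ m + s := by omega
  have hek : e k = (ℓ : ℤ) + c - s := by
    have h1 := hmono (show m ≤ k by omega)
    have h2 := hmono (show k ≤ m + s by omega)
    linarith
  have hek1 : e (k - 1) = (ℓ : ℤ) + c - s := by
    have h1 := hmono (show m ≤ k - 1 by omega)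
    have h2 := hmono (show k - 1 ≤ m + s by omega)
    linarith
  have hc1 : ((k - 1 : ℕ) : ℤ) = (k : ℤ) - 1 := by omega
  have hSk : (S k : ℤ) = (ℓ : ℤ) + c - s + 2 * k := by have := he k; linarith
  have hSk1 : (S (k - 1) : ℤ) = (ℓ : ℤ) + c - s + 2 * k - 2 := by
    have := he (k - 1); rw [hc1] at this; linarith
  have hm' : (m : ℤ) = (ℓ : ℤ) * s := by exact_mod_cast hm
  have dlt : ∀ i' k', i' < ℓ → deg i' k' = (i' : ℤ) + k' - s := fun i' k' h => by
    rw [hdeg, if_neg (by omega), if_neg (by omega)]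
  have deq : ∀ k', deg ℓ k' = (m : ℤ) + ℓ := fun k' => by
    rw [hdeg, if_neg (by omega), if_pos rfl]; linarith
  have dgt : ∀ j' k', ℓ < j' → deg j' k' = (j' : ℤ) + k' := fun j' k' h => by
    rw [hdeg, if_pos h]
  clear hm hm' ha hb he hS hdeg hmono hyp1 hyp2 hek hek1 hδ
  rcases lt_trichotomy i ℓ with hi | hi | hi
  · rcases lt_trichotomy j ℓ with hj | hj | hj
    · exfalso
      rw [dlt i _ hi, dlt j _ hj] at hy1
      omega
    · exfalso
      subst hj
      rw [dlt i _ hi, deq] at hy1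
      omega
    · refine Or.inr ⟨hi, hj, ?_⟩
      rw [dlt i _ hi, dgt j _ hj] at hy1
      rw [dlt i _ hi, dgt j _ hj] at hy2
      omega
  · subst hi
    rcases eq_or_lt_of_le hij with hj | hj
    · exact Or.inl ⟨rfl, hj.symm⟩
    · exfalso
      rw [deq, dgt j _ hj] at hy2
      omega
  · exfalso
    rw [dgt i _ hi, dgt j _ (lt_of_lt_of_le hi hij)] at hy2
    omega
end

section
/- Let m be a natural number and let a, b : Fin(m+1) → ℝ with a injective. Then the set B = { t ∈ ℝ : there exist indices k ≠ k′ in Fin(m+1) such that a(k)·t + b(k) = a(k′)·t + b(k′) and a(k)·t + b(k) ≤ a(l)·t + b(l) for every l } is finite and has at most m elements. -/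
/-- Given `m+1` affine functions `t ↦ a k * t + b k` on `ℝ` with pairwise distinct slopes,
the set of points `t` at which the pointwise minimum is attained by at least two distinct
indices is finite, with at most `m` elements. -/
theorem stmt8 (m : ℕ) (a b : Fin (m + 1) → ℝ) (ha : Function.Injective a) :
    ({t : ℝ | ∃ k k' : Fin (m + 1), k ≠ k' ∧
        a k * t + b k = a k' * t + b k' ∧
        ∀ l, a k * t + b k ≤ a l * t + b l}).Finite ∧
    ({t : ℝ | ∃ k k' : Fin (m + 1), k ≠ k' ∧
        a k * t + b k = a k' * t + b k' ∧
        ∀ l, a k * t + b k ≤ a l * t + b l}).ncard ≤ m := by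
  classical
  set B := {t : ℝ | ∃ k k' : Fin (m + 1), k ≠ k' ∧
        a k * t + b k = a k' * t + b k' ∧
        ∀ l, a k * t + b k ≤ a l * t + b l} with hB
  -- crossing lemma: minimizer at earlier time has larger slope
  have cross : ∀ (t1 t2 : ℝ) (k k' : Fin (m + 1)), t1 < t2 →
      (∀ l, a k * t1 + b k ≤ a l * t1 + b l) →
      (∀ l, a k' * t2 + b k' ≤ a l * t2 + b l) → a k' ≤ a k := by
    intro t1 t2 k k' ht h1 h2
    have h1' := h1 k'
    have h2' := h2 k
    nlinarith [mul_pos (sub_pos.mpr ht) (sub_pos.mpr ht)]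
  -- for each t ∈ B there is a minimizer of minimal slope, with another minimizer of larger slope
  have hchoice : ∀ t ∈ B, ∃ k : Fin (m + 1),
      (∀ l, a k * t + b k ≤ a l * t + b l) ∧
      ∃ k'' : Fin (m + 1), (∀ l, a k'' * t + b k'' ≤ a l * t + b l) ∧ a k < a k'' := by
    intro t ht
    obtain ⟨k, k', hkk', heq, hmin⟩ := ht
    have hmin' : ∀ l, a k' * t + b k' ≤ a l * t + b l := by
      intro l; rw [← heq]; exact hmin l
    set M : Finset (Fin (m + 1)) :=
      Finset.univ.filter (fun j => ∀ l, a j * t + b j ≤ a l * t + b l) with hM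
    have hkM : k ∈ M := by simp [hM, hmin]
    have hk'M : k' ∈ M := by simp [hM, hmin']
    obtain ⟨k0, hk0M, hk0min⟩ := M.exists_min_image a ⟨k, hkM⟩
    have hk0 : ∀ l, a k0 * t + b k0 ≤ a l * t + b l := by
      have := hk0M; simp [hM] at this; exact this
    have hane : a k ≠ a k' := fun h => hkk' (ha h)
    rcases lt_or_eq_of_le (hk0min k hkM) with h | h
    · exact ⟨k0, hk0, k, hmin, h⟩
    · refine ⟨k0, hk0, k', hmin', ?_⟩
      exact lt_of_le_of_ne (hk0min k' hk'M) (h ▸ hane)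
  -- the selection function
  let F : ℝ → Fin (m + 1) := fun t => if h : t ∈ B then (hchoice t h).choose else 0
  have hFmin : ∀ t (h : t ∈ B), ∀ l, a (F t) * t + b (F t) ≤ a l * t + b l := by
    intro t h l
    have := (hchoice t h).choose_spec.1 l
    simpa [F, dif_pos h] using this
  have hFwit : ∀ t (h : t ∈ B), ∃ k'' : Fin (m + 1),
      (∀ l, a k'' * t + b k'' ≤ a l * t + b l) ∧ a (F t) < a k'' := by
    intro t h
    have := (hchoice t h).choose_spec.2
    simpa [F, dif_pos h] using this
  -- F is injective on B
  have hinj : Set.InjOn F B := by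
    intro t1 h1 t2 h2 hF
    by_contra hne
    rcases lt_or_gt_of_ne hne with hlt | hlt
    · obtain ⟨k2, hk2min, hk2lt⟩ := hFwit t2 h2
      have h1min := hFmin t1 h1
      have := cross t1 t2 (F t1) k2 hlt h1min hk2min
      rw [hF] at this
      exact absurd this (not_le.mpr hk2lt)
    · obtain ⟨k1, hk1min, hk1lt⟩ := hFwit t1 h1
      have h2min := hFmin t2 h2
      have := cross t2 t1 (F t2) k1 hlt h2min hk1min
      rw [← hF] at this
      exact absurd this (not_le.mpr hk1lt)
  -- F never hits the index of maximal slope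
  obtain ⟨kmax, _, hkmax⟩ := Finset.univ.exists_max_image a ⟨0, Finset.mem_univ 0⟩
  have himg : F '' B ⊆ ↑(Finset.univ.erase kmax) := by
    rintro x ⟨t, ht, rfl⟩
    obtain ⟨k'', _, hlt⟩ := hFwit t ht
    have : a (F t) < a kmax := lt_of_lt_of_le hlt (hkmax k'' (Finset.mem_univ _))
    simp [Finset.mem_erase]
    exact fun h => absurd (h ▸ this) (lt_irrefl _)
  have hcard : (Finset.univ.erase kmax : Finset (Fin (m + 1))).card = m := by
    rw [Finset.card_erase_of_mem (Finset.mem_univ _)]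
    simp
  have hfin : B.Finite :=
    Set.Finite.of_finite_image
      (((Finset.univ.erase kmax).finite_toSet).subset himg) hinj
  refine ⟨hfin, ?_⟩
  have h1 : B.ncard = (F '' B).ncard := (Set.ncard_image_of_injOn hinj).symm
  have h2 : (F '' B).ncard ≤ ((Finset.univ.erase kmax : Finset (Fin (m+1))) : Set (Fin (m+1))).ncard :=
    Set.ncard_le_ncard himg ((Finset.univ.erase kmax).finite_toSet)
  rw [h1]
  calc (F '' B).ncard ≤ _ := h2
    _ = m := by rw [Set.ncard_coe_finset]; exact hcard
end

section
/- Let X be a type, ψ : X → ℝ a function, and m a natural number. Suppose there exist points v₀, …, v_m in X such that the values ψ(v₀), …, ψ(v_m) are pairwise distinct. Then the family of m+1 functions f_k : X → ℝ defined by f_k(v) = k·ψ(v), for k = 0, …, m, is tropically independent: for every choice of real numbers b₀, …, b_m there exists a point v ∈ X at which the minimum of { k·ψ(v) + b_k : 0 ≤ k ≤ m } is attained for exactly one index k. -/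
/-- If `ψ : X → ℝ` takes `m+1` pairwise distinct values, then the family of functions
`v ↦ k·ψ(v)` for `k = 0, …, m` is tropically independent: for every choice of constants
`b k`, there is a point of `X` at which the minimum of `{k·ψ(v) + b k}` is attained for
exactly one index `k`. -/
theorem stmt9 {X : Type*} (ψ : X → ℝ) (m : ℕ) (v : Fin (m + 1) → X)
    (hv : Function.Injective fun k => ψ (v k)) :
    ∀ b : Fin (m + 1) → ℝ, ∃ x : X, ∃! k : Fin (m + 1),
      ∀ l : Fin (m + 1), ((k : ℕ) : ℝ) * ψ x + b k ≤ ((l : ℕ) : ℝ) * ψ x + b l := by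
  intro b
  by_contra h
  push_neg at h
  -- If a minimizer at t has another minimizer at t' > t, indices must decrease.
  have cross : ∀ (t t' : ℝ) (k l : Fin (m + 1)), t < t' →
      (∀ j : Fin (m + 1), ((k : ℕ) : ℝ) * t + b k ≤ ((j : ℕ) : ℝ) * t + b j) →
      (∀ j : Fin (m + 1), ((l : ℕ) : ℝ) * t' + b l ≤ ((j : ℕ) : ℝ) * t' + b j) →
      l ≤ k := by
    intro t t' k l htt hk hl
    by_contra hlk
    push_neg at hlk
    have hcast : ((k : ℕ) : ℝ) < ((l : ℕ) : ℝ) := by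
      exact_mod_cast hlk
    have h1 := hk l
    have h2 := hl k
    nlinarith [h1, h2, mul_pos (sub_pos.mpr hcast) (sub_pos.mpr htt)]
  -- For each i, pick two minimizers l i < f i at t = ψ (v i).
  have key : ∀ i : Fin (m + 1), ∃ k l : Fin (m + 1), l < k ∧
      (∀ j : Fin (m + 1), ((k : ℕ) : ℝ) * ψ (v i) + b k ≤ ((j : ℕ) : ℝ) * ψ (v i) + b j) ∧
      (∀ j : Fin (m + 1), ((l : ℕ) : ℝ) * ψ (v i) + b l ≤ ((j : ℕ) : ℝ) * ψ (v i) + b j) := by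
    intro i
    obtain ⟨k, -, hk⟩ := Finset.exists_min_image Finset.univ
      (fun j : Fin (m + 1) => ((j : ℕ) : ℝ) * ψ (v i) + b j) ⟨0, Finset.mem_univ 0⟩
    have hk' : ∀ j : Fin (m + 1), ((k : ℕ) : ℝ) * ψ (v i) + b k ≤ ((j : ℕ) : ℝ) * ψ (v i) + b j :=
      fun j => hk j (Finset.mem_univ j)
    have hne := h (v i)
    have : ¬ ∀ y : Fin (m + 1), (∀ j : Fin (m + 1), ((y : ℕ) : ℝ) * ψ (v i) + b y ≤ ((j : ℕ) : ℝ) * ψ (v i) + b j)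
        → y = k := by
      intro hall
      exact hne ⟨k, hk', hall⟩
    push_neg at this
    obtain ⟨y, hy, hyk⟩ := this
    rcases lt_or_gt_of_ne hyk with hlt | hgt
    · exact ⟨k, y, hlt, hk', hy⟩
    · exact ⟨y, k, hgt, hy, hk'⟩
  choose f g hg hf hgl using key
  -- f is injective
  have finj : Function.Injective f := by
    intro i j hij
    by_contra hne
    have hψ : ψ (v i) ≠ ψ (v j) := fun hc => hne (hv hc)
    rcases lt_or_gt_of_ne hψ with hlt | hgt
    · have h1 : f j ≤ g i := cross _ _ (g i) (f j) hlt (hgl i) (hf j)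
      exact (ne_of_gt (lt_of_le_of_lt h1 (hg i))) hij
    · have h1 : f i ≤ g j := cross _ _ (g j) (f i) hgt (hgl j) (hf i)
      exact (ne_of_lt (lt_of_le_of_lt h1 (hg j))) hij
  -- injective self-map on a finite type is surjective, so 0 is hit
  have fsurj : Function.Surjective f := Finite.surjective_of_injective finj
  obtain ⟨i, hi⟩ := fsurj 0
  have := hg i
  rw [hi] at this
  exact absurd this (by simp)
end

section
/- Let ℓ be a natural number with c − s ≤ ℓ ≤ ⌊r/2⌋, where c = ⌈r/2⌉. Then the number of pairs (i,j) ∈ A with i < ℓ, ℓ < j, and i + j = ℓ + c equals ℓ + s − c. -/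
/-- Counting claim in Case 1 of the inductive step (Theorem 1.1, `C(r+2,2) > 2d−g+1`):
with `c = ⌈r/2⌉` and `c − s ≤ ℓ ≤ ⌊r/2⌋`, the number of pairs `(i,j) ∈ A` with
`i < ℓ < j` and `i + j = ℓ + c` equals `ℓ + s − c`. -/
theorem stmt10 (r s : ℕ) (hs : 1 ≤ s) (hrs : 2 * s ≤ r)
    (ε : ℤ) (hε : ε = if Odd r then 1 else 0)
    (A : Set (ℤ × ℤ))
    (hA : A = {p : ℤ × ℤ | 0 ≤ p.1 ∧ p.1 ≤ p.2 ∧ p.2 ≤ (r : ℤ) ∧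
        ¬(p.1 + 2 ≤ p.2 ∧ p.1 + p.2 < (r : ℤ) - 2 * s + ε) ∧
        ¬(p.1 + 2 ≤ p.2 ∧ (r : ℤ) + 2 * s < p.1 + p.2) ∧
        ¬(((r : ℤ) - s + ε ≤ p.1 + p.2 ∧ p.1 + p.2 ≤ (r : ℤ) + s) ∧
            (2 * p.1 ≤ (r : ℤ) - 2 * s - 2 + ε ∨ (r : ℤ) + 2 * s + 2 ≤ 2 * p.2))})
    (c : ℕ) (hc : c = (r + 1) / 2)
    (ℓ : ℕ) (hℓ1 : (c : ℤ) - s ≤ (ℓ : ℤ)) (hℓ2 : ℓ ≤ r / 2) :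
    (({p ∈ A | p.1 < (ℓ : ℤ) ∧ (ℓ : ℤ) < p.2 ∧ p.1 + p.2 = (ℓ : ℤ) + c}).ncard : ℤ)
      = (ℓ : ℤ) + s - c := by
  have hε01 : ε = 0 ∨ ε = 1 := by
    rw [hε]; split <;> simp
  have h2c : 2 * (c : ℤ) = (r : ℤ) + ε := by
    rcases Nat.even_or_odd r with he | ho
    · have : ¬ Odd r := by simpa [Nat.not_odd_iff_even] using he
      rw [hε, if_neg this]
      obtain ⟨k, hk⟩ := he
      subst hc; subst hk; push_cast [Nat.add_div_right, Nat.succ_div]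
      omega
    · rw [hε, if_pos ho]
      obtain ⟨k, hk⟩ := ho
      subst hc; subst hk
      have : (2 * k + 1 + 1) / 2 = k + 1 := by omega
      rw [this]; push_cast; ring
  have h2ℓ : 2 * (ℓ : ℤ) ≤ (r : ℤ) := by
    have : 2 * ℓ ≤ r := by omega
    exact_mod_cast this
  have hrsZ : 2 * (s : ℤ) ≤ (r : ℤ) := by exact_mod_cast hrs
  have hsZ : (1 : ℤ) ≤ (s : ℤ) := by exact_mod_cast hs
  have hset : {p ∈ A | p.1 < (ℓ : ℤ) ∧ (ℓ : ℤ) < p.2 ∧ p.1 + p.2 = (ℓ : ℤ) + c}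
      = ↑((Finset.Icc ((c : ℤ) - s) ((ℓ : ℤ) - 1)).image
          (fun i => (i, (ℓ : ℤ) + c - i))) := by
    ext ⟨i, j⟩
    simp only [hA, Set.mem_setOf_eq, Finset.coe_image, Set.mem_image,
      Finset.mem_coe, Finset.mem_Icc, Prod.mk.injEq]
    constructor
    · rintro ⟨⟨h0, hij, hjr, h1, h2, h3⟩, hiℓ, hℓj, hsum⟩
      refine ⟨i, ⟨?_, by omega⟩, rfl, by omega⟩
      by_contra hlt
      push_neg at hlt
      exact h3 ⟨⟨by omega, by omega⟩, Or.inl (by omega)⟩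
    · rintro ⟨x, ⟨hx1, hx2⟩, rfl, rfl⟩
      refine ⟨⟨by omega, by omega, by omega, ?_, ?_, ?_⟩, by omega, by omega, by ring⟩
      · rintro ⟨-, h⟩; omega
      · rintro ⟨-, h⟩; omega
      · rintro ⟨-, h | h⟩ <;> omega
  rw [hset, Set.ncard_coe_finset,
    Finset.card_image_of_injective _ (fun a b h => (Prod.mk.injEq _ _ _ _ ▸ h).1),
    Int.card_Icc]
  have : (ℓ : ℤ) - 1 + 1 - ((c : ℤ) - s) = (ℓ : ℤ) + s - c := by ring
  rw [this]
  omega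
end

section
/- Let ℓ be a natural number with ⌊r/2⌋ < ℓ and 2ℓ < r + 2s, and let c = ⌈r/2⌉. Then the number of pairs (i,j) ∈ A with i < ℓ, ℓ < j, and i + j = ℓ + c equals r + s − ℓ − ⌊r/2⌋. -/
/-- Counting claim in Case 2 of the inductive step (Theorem 1.1, `C(r+2,2) > 2d−g+1`):
with `c = ⌈r/2⌉`, `⌊r/2⌋ < ℓ` and `2ℓ < r + 2s`, the number of pairs `(i,j) ∈ A` with
`i < ℓ < j` and `i + j = ℓ + c` equals `r + s − ℓ − ⌊r/2⌋`. -/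
theorem stmt11 (r s : ℕ) (hs : 1 ≤ s) (hrs : 2 * s ≤ r)
    (ε : ℤ) (hε : ε = if Odd r then 1 else 0)
    (A : Set (ℤ × ℤ))
    (hA : A = {p : ℤ × ℤ | 0 ≤ p.1 ∧ p.1 ≤ p.2 ∧ p.2 ≤ (r : ℤ) ∧
        ¬(p.1 + 2 ≤ p.2 ∧ p.1 + p.2 < (r : ℤ) - 2 * s + ε) ∧
        ¬(p.1 + 2 ≤ p.2 ∧ (r : ℤ) + 2 * s < p.1 + p.2) ∧
        ¬(((r : ℤ) - s + ε ≤ p.1 + p.2 ∧ p.1 + p.2 ≤ (r : ℤ) + s) ∧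
            (2 * p.1 ≤ (r : ℤ) - 2 * s - 2 + ε ∨ (r : ℤ) + 2 * s + 2 ≤ 2 * p.2))})
    (c : ℕ) (hc : c = (r + 1) / 2)
    (ℓ : ℕ) (hℓ1 : r / 2 < ℓ) (hℓ2 : 2 * ℓ < r + 2 * s) :
    (({p ∈ A | p.1 < (ℓ : ℤ) ∧ (ℓ : ℤ) < p.2 ∧ p.1 + p.2 = (ℓ : ℤ) + c}).ncard : ℤ)
      = (r : ℤ) + s - ℓ - ((r / 2 : ℕ) : ℤ) := by
  subst hA
  -- arithmetic facts about ε, c, m := r/2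
  have hε01 : ε = 0 ∨ ε = 1 := by
    rw [hε]; split <;> simp
  have hrm : (r : ℤ) = 2 * ((r / 2 : ℕ) : ℤ) + ε := by
    rw [hε]; split
    · next h => have : r % 2 = 1 := Nat.odd_iff.mp h; omega
    · next h => have : r % 2 = 0 := Nat.even_iff.mp (Nat.not_odd_iff_even.mp h); omega
  have hcm : (c : ℤ) = ((r / 2 : ℕ) : ℤ) + ε := by
    rw [hc, hε]; split
    · next h => have : r % 2 = 1 := Nat.odd_iff.mp h; omega
    · next h => have : r % 2 = 0 := Nat.even_iff.mp (Nat.not_odd_iff_even.mp h); omega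
  set m : ℤ := ((r / 2 : ℕ) : ℤ) with hmdef
  have hm0 : 0 ≤ m := Int.natCast_nonneg _
  have hℓm : m < (ℓ : ℤ) := by omega
  have hℓ2' : 2 * (ℓ : ℤ) < (r : ℤ) + 2 * s := by exact_mod_cast hℓ2
  have hrs' : 2 * (s : ℤ) ≤ (r : ℤ) := by exact_mod_cast hrs
  have hs' : 1 ≤ (s : ℤ) := by exact_mod_cast hs
  -- the set equals an image of an interval
  have hset : {p : ℤ × ℤ | ((0 ≤ p.1 ∧ p.1 ≤ p.2 ∧ p.2 ≤ (r : ℤ) ∧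
        ¬(p.1 + 2 ≤ p.2 ∧ p.1 + p.2 < (r : ℤ) - 2 * s + ε) ∧
        ¬(p.1 + 2 ≤ p.2 ∧ (r : ℤ) + 2 * s < p.1 + p.2) ∧
        ¬(((r : ℤ) - s + ε ≤ p.1 + p.2 ∧ p.1 + p.2 ≤ (r : ℤ) + s) ∧
            (2 * p.1 ≤ (r : ℤ) - 2 * s - 2 + ε ∨ (r : ℤ) + 2 * s + 2 ≤ 2 * p.2)))) ∧
        p.1 < (ℓ : ℤ) ∧ (ℓ : ℤ) < p.2 ∧ p.1 + p.2 = (ℓ : ℤ) + c} =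
      (fun i : ℤ => (i, (ℓ : ℤ) + c - i)) '' Set.Icc ((ℓ : ℤ) - s) ((c : ℤ) - 1) := by
    ext ⟨x, y⟩
    simp only [Set.mem_setOf_eq, Set.mem_image, Set.mem_Icc, Prod.mk.injEq]
    constructor
    · rintro ⟨⟨h1, h2, h3, h4, h5, h6⟩, h7, h8, h9⟩
      refine ⟨x, ⟨?_, ?_⟩, rfl, by omega⟩ <;> omega
    · rintro ⟨i, ⟨hi1, hi2⟩, rfl, rfl⟩
      refine ⟨⟨by omega, by omega, by omega, by omega, by omega, by omega⟩, by omega, by omega, by omega⟩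
  rw [Set.sep_setOf, hset,
    Set.ncard_image_of_injective _ (fun a b h => by simpa using congrArg Prod.fst h)]
  rw [show Set.Icc ((ℓ : ℤ) - s) ((c : ℤ) - 1) = ↑(Finset.Icc ((ℓ : ℤ) - s) ((c : ℤ) - 1)) by simp,
    Set.ncard_coe_finset, Int.card_Icc]
  have : ((c : ℤ) - 1 + 1 - ((ℓ : ℤ) - s)) = (c : ℤ) + s - ℓ := by ring
  rw [this]
  have hnn : 0 ≤ (c : ℤ) + s - ℓ := by omega
  rw [Int.toNat_of_nonneg hnn]
  omega
end
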